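/- Let S be a semigroup and let S¹ denote the monoid obtained from S by adjoining a new identity element. Then: (1) S is Markov as a semigroup if and only if S¹ is Markov as a semigroup; (2) S is robustly Markov with respect to some alphabet if and only if S¹ is robustly Markov with respect to some alphabet; (3) S is strongly Markov if and only if S¹ is strongly Markov. -/

import Mathlib

open Function

/-- A language is regular if it is accepted by a deterministic finite automaton
with a finite state set. -/
def RegularLang {A : Type} (L : Language A) : Prop :=
  ∃ (Q : Type) (_ : Fintype Q) (M : DFA A Q), M.accepts = L

/-- The product of a nonempty word under the letter-assignment `φ`; the empty
word is sent to `none`. This is the induced map `φ⁺` on nonempty words. -/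
def prodPlus {A S : Type} [Semigroup S] (φ : A → S) : List A → Option S
  | [] => none
  | a :: w => some (w.foldl (fun s b => s * φ b) (φ a))

/-- The induced monoid homomorphism `φ*` from the free monoid of words. -/
def monProd {A M : Type} [Monoid M] (φ : A → M) (w : List A) : M :=
  (w.map φ).prod

/-- A semigroup Markov language for `S` over `A` (with respect to `φ`): a regular,
`+`-prefix-closed language of nonempty words mapping bijectively onto `S` under `φ⁺`. -/
structure IsSgMarkovLang {A S : Type} [Semigroup S] (φ : A → S) (L : Language A) : Prop where
  regular : RegularLang L
  not_empty_mem : [] ∉ L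
  plus_prefix_closed : ∀ u v : List A, u ≠ [] → v ≠ [] → u ++ v ∈ L → u ∈ L
  unique_rep : ∀ s : S, ∃! w : List A, w ∈ L ∧ prodPlus φ w = some s

/-- A robust semigroup Markov language: additionally every word of `L` has minimal
length among (nonempty) words representing the same element. -/
structure IsRobustSgMarkovLang {A S : Type} [Semigroup S] (φ : A → S) (L : Language A)
    extends IsSgMarkovLang φ L : Prop where
  min_length : ∀ w ∈ L, ∀ v : List A, prodPlus φ v = prodPlus φ w → w.length ≤ v.length

/-- A monoid Markov language for `M` over `A` (with respect to `φ`): a regular,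
prefix-closed language mapping bijectively onto `M` under `φ*`. -/
structure IsMonMarkovLang {A M : Type} [Monoid M] (φ : A → M) (L : Language A) : Prop where
  regular : RegularLang L
  prefix_closed : ∀ u v : List A, u ++ v ∈ L → u ∈ L
  unique_rep : ∀ m : M, ∃! w : List A, w ∈ L ∧ monProd φ w = m

/-- A robust monoid Markov language: additionally every word of `L` has minimal
length among words representing the same element. -/
structure IsRobustMonMarkovLang {A M : Type} [Monoid M] (φ : A → M) (L : Language A)
    extends IsMonMarkovLang φ L : Prop where
  min_length : ∀ w ∈ L, ∀ v : List A, monProd φ v = monProd φ w → w.length ≤ v.length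

/-- `S` is Markov as a semigroup. -/
def SgMarkov (S : Type) [Semigroup S] : Prop :=
  ∃ (A : Type) (_ : Fintype A) (φ : A → S),
    (∀ s : S, ∃ w : List A, prodPlus φ w = some s) ∧
    ∃ L : Language A, IsSgMarkovLang φ L

/-- `S` is robustly Markov (as a semigroup) with respect to some alphabet. -/
def SgRobustlyMarkov (S : Type) [Semigroup S] : Prop :=
  ∃ (A : Type) (_ : Fintype A) (φ : A → S),
    (∀ s : S, ∃ w : List A, prodPlus φ w = some s) ∧
    ∃ L : Language A, IsRobustSgMarkovLang φ L

/-- `S` is strongly Markov (as a semigroup). -/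
def SgStronglyMarkov (S : Type) [Semigroup S] : Prop :=
  ∀ (A : Type) [Fintype A] (φ : A → S),
    (∀ s : S, ∃ w : List A, prodPlus φ w = some s) →
    ∃ L : Language A, IsRobustSgMarkovLang φ L

/-- `M` is Markov as a monoid. -/
def MonMarkov (M : Type) [Monoid M] : Prop :=
  ∃ (A : Type) (_ : Fintype A) (φ : A → M),
    Surjective (monProd φ) ∧ ∃ L : Language A, IsMonMarkovLang φ L

/-- `M` is robustly Markov (as a monoid) with respect to some alphabet. -/
def MonRobustlyMarkov (M : Type) [Monoid M] : Prop :=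
  ∃ (A : Type) (_ : Fintype A) (φ : A → M),
    Surjective (monProd φ) ∧ ∃ L : Language A, IsRobustMonMarkovLang φ L

/-- `M` is strongly Markov (as a monoid). -/
def MonStronglyMarkov (M : Type) [Monoid M] : Prop :=
  ∀ (A : Type) [Fintype A] (φ : A → M),
    Surjective (monProd φ) →
    ∃ L : Language A, IsRobustMonMarkovLang φ L


namespace Stmt15Aux

/-! ### Product lemmas -/

theorem monProd_cons {A M : Type} [Monoid M] (χ : A → M) (a : A) (t : List A) :
    monProd χ (a :: t) = χ a * monProd χ t := by simp [monProd]

theorem foldl_mul_eq {A M : Type} [Monoid M] (χ : A → M) :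
    ∀ (t : List A) (x : M), t.foldl (fun s b => s * χ b) x = x * monProd χ t := by
  intro t
  induction t with
  | nil => intro x; simp [monProd]
  | cons b t ih => intro x; simp [monProd_cons, ih, mul_assoc, List.foldl_cons]

theorem prodPlus_eq_monProd {A M : Type} [Monoid M] (χ : A → M) (w : List A) (hw : w ≠ []) :
    prodPlus χ w = some (monProd χ w) := by
  match w with
  | a :: t => simp [prodPlus, foldl_mul_eq, monProd_cons]

theorem ne_nil_of_prodPlus {A S : Type} [Semigroup S] {φ : A → S} {w : List A} {s : S}
    (h : prodPlus φ w = some s) : w ≠ [] := by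
  rintro rfl; simp [prodPlus] at h

theorem exists_prodPlus {A S : Type} [Semigroup S] (φ : A → S) (w : List A) (hw : w ≠ []) :
    ∃ s, prodPlus φ w = some s := by
  match w with
  | a :: t => exact ⟨_, rfl⟩

theorem foldl_coe {A S : Type} [Semigroup S] (φ : A → S) :
    ∀ (t : List A) (s : S),
      t.foldl (fun x b => x * ((φ b : S) : WithOne S)) (↑s) = ↑(t.foldl (fun x b => x * φ b) s) := by
  intro t
  induction t with
  | nil => intro s; rfl
  | cons b t ih => intro s; rw [List.foldl_cons, List.foldl_cons, ← WithOne.coe_mul, ih]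

theorem coe_prodPlus {A S : Type} [Semigroup S] (φ : A → S) (v : List A) (s : S)
    (h : prodPlus φ v = some s) :
    prodPlus (fun c => ((φ c : S) : WithOne S)) v = some (↑s) := by
  match v with
  | a :: t =>
    simp only [prodPlus, Option.some.injEq] at h ⊢
    rw [foldl_coe, h]

theorem monProd_coe {A S : Type} [Semigroup S] (φ : A → S) (v : List A) (s : S)
    (h : prodPlus φ v = some s) :
    monProd (fun c => ((φ c : S) : WithOne S)) v = ↑s := by
  have h2 := coe_prodPlus φ v s h
  rw [prodPlus_eq_monProd _ _ (ne_nil_of_prodPlus h)] at h2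
  exact Option.some.inj h2

/-! ### Erasure lemmas -/

section Erase

variable {S B C : Type} [Semigroup S]
variable {ψ : B → WithOne S} {φ : C → S} {ι : C → B} {g : B → Option C}

theorem erase_monProd (hg1 : ∀ b, g b = none → ψ b = 1)
    (hgsome : ∀ b c, g b = some c → b = ι c)
    (hψι : ∀ c, ψ (ι c) = ↑(φ c)) :
    ∀ w : List B, monProd ψ w = monProd (fun c => (↑(φ c) : WithOne S)) (w.filterMap g) := by
  intro w
  induction w with
  | nil => rfl
  | cons b t ih =>
    rw [monProd_cons]
    cases hgb : g b with
    | none =>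
      rw [List.filterMap_cons, hgb, hg1 b hgb, one_mul]
      exact ih
    | some c =>
      rw [List.filterMap_cons, hgb, monProd_cons, ih, hgsome b c hgb, hψι]

theorem filterMap_map_ι (hgι : ∀ c, g (ι c) = some c) (v : List C) :
    (v.map ι).filterMap g = v := by
  induction v with
  | nil => rfl
  | cons c v ih => rw [List.map_cons, List.filterMap_cons, hgι c, ih]

theorem prodPlus_erase (hg1 : ∀ b, g b = none → ψ b = 1)
    (hgsome : ∀ b c, g b = some c → b = ι c)
    (hψι : ∀ c, ψ (ι c) = ↑(φ c)) (w : List B) (hw : w ≠ []) :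
    prodPlus ψ w = some (monProd (fun c => (↑(φ c) : WithOne S)) (w.filterMap g)) := by
  rw [prodPlus_eq_monProd ψ w hw, erase_monProd hg1 hgsome hψι]

theorem prodPlus_erase_one (hg1 : ∀ b, g b = none → ψ b = 1)
    (hgsome : ∀ b c, g b = some c → b = ι c)
    (hψι : ∀ c, ψ (ι c) = ↑(φ c)) (w : List B) (hw : w ≠ [])
    (hwp : prodPlus ψ w = some 1) : w.filterMap g = [] := by
  by_contra hne
  obtain ⟨s, hs⟩ := exists_prodPlus φ (w.filterMap g) hne
  rw [prodPlus_erase hg1 hgsome hψι w hw, monProd_coe φ _ s hs] at hwp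
  exact WithOne.coe_ne_one (Option.some.inj hwp)

theorem prodPlus_erase_coe (hg1 : ∀ b, g b = none → ψ b = 1)
    (hgsome : ∀ b c, g b = some c → b = ι c)
    (hψι : ∀ c, ψ (ι c) = ↑(φ c)) (w : List B) (hw : w ≠ []) (s : S)
    (hwp : prodPlus ψ w = some ↑s) : prodPlus φ (w.filterMap g) = some s := by
  have hne : w.filterMap g ≠ [] := by
    intro he
    rw [prodPlus_erase hg1 hgsome hψι w hw, he] at hwp
    exact WithOne.coe_ne_one (Option.some.inj hwp).symm
  obtain ⟨s', hs'⟩ := exists_prodPlus φ (w.filterMap g) hne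
  rw [prodPlus_erase hg1 hgsome hψι w hw, monProd_coe φ _ s' hs'] at hwp
  rw [hs', WithOne.coe_inj.mp (Option.some.inj hwp)]

theorem prodPlus_map_ι (hgι : ∀ c, g (ι c) = some c) (hg1 : ∀ b, g b = none → ψ b = 1)
    (hgsome : ∀ b c, g b = some c → b = ι c)
    (hψι : ∀ c, ψ (ι c) = ↑(φ c)) (v : List C) (s : S) (h : prodPlus φ v = some s) :
    prodPlus ψ (v.map ι) = some ↑s := by
  have hv : v ≠ [] := ne_nil_of_prodPlus h
  have hmv : v.map ι ≠ [] := by simpa using hv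
  rw [prodPlus_erase hg1 hgsome hψι _ hmv, filterMap_map_ι hgι, monProd_coe φ v s h]

theorem exists_one_letter (hg1 : ∀ b, g b = none → ψ b = 1)
    (hgsome : ∀ b c, g b = some c → b = ι c)
    (hψι : ∀ c, ψ (ι c) = ↑(φ c)) (w : List B) (hw : prodPlus ψ w = some 1) :
    ∃ b, ψ b = 1 := by
  have hwne := ne_nil_of_prodPlus hw
  have h0 := prodPlus_erase_one hg1 hgsome hψι w hwne hw
  match w with
  | b :: t =>
    have hb : g b = none := (List.filterMap_eq_nil_iff.mp h0) b (by simp)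
    exact ⟨b, hg1 b hb⟩

end Erase

/-! ### Regularity constructions -/

section Reg
variable {B C : Type} {ι : C → B} {g : B → Option C}

/-- Subset construction state set. -/
def eraseE {Q : Type} (g : B → Option C) (M : DFA B Q) (P : Set Q) (v : List C) : Set Q :=
  { q | ∃ w, w.filterMap g = v ∧ ∃ p ∈ P, M.evalFrom p w = q }

theorem eraseE_cons {Q : Type} (hgι : ∀ c, g (ι c) = some c)
    (hgsome : ∀ b c, g b = some c → b = ι c) (M : DFA B Q) (P : Set Q) (c : C) (v : List C) :
    eraseE g M P (c :: v) = eraseE g M ((fun p => M.step p (ι c)) '' (eraseE g M P [])) v := by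
  ext q
  constructor
  · rintro ⟨w, hw, p, hp, hev⟩
    rw [List.filterMap_eq_cons_iff] at hw
    obtain ⟨l₁, a, l₂, rfl, h₁, ha, h₂⟩ := hw
    have hb : a = ι c := hgsome _ _ ha
    refine ⟨l₂, h₂, M.step (M.evalFrom p l₁) (ι c),
      ⟨M.evalFrom p l₁, ⟨l₁, ?_, p, hp, rfl⟩, rfl⟩, ?_⟩
    · exact List.filterMap_eq_nil_iff.mpr h₁
    · rw [← hev, hb]
      simp [DFA.evalFrom, List.foldl_append]
  · rintro ⟨w, hw, p', ⟨r, ⟨u, hu, p, hp, hev⟩, rfl⟩, hev2⟩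
    refine ⟨u ++ ι c :: w, ?_, p, hp, ?_⟩
    · rw [List.filterMap_append, List.filterMap_cons, hgι c, hu]
      simp [hw]
    · rw [← hev2, ← hev]
      simp [DFA.evalFrom, List.foldl_append]

theorem erase_regular (hgι : ∀ c, g (ι c) = some c)
    (hgsome : ∀ b c, g b = some c → b = ι c) {L : Language B} (hreg : RegularLang L) :
    RegularLang {v : List C | v ≠ [] ∧ ∃ w ∈ L, w.filterMap g = v} := by
  classical
  obtain ⟨Q, _, M, hM⟩ := hreg
  haveI : Fintype (Set Q) := Fintype.ofFinite _
  refine ⟨Set Q × Bool, inferInstance,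
    ⟨fun Pb c => (eraseE g M ((fun p => M.step p (ι c)) '' Pb.1) [], true),
     (eraseE g M {M.start} [], false),
     {Pb | (∃ q ∈ Pb.1, q ∈ M.accept) ∧ Pb.2 = true}⟩, ?_⟩
  set D : DFA C (Set Q × Bool) :=
    ⟨fun Pb c => (eraseE g M ((fun p => M.step p (ι c)) '' Pb.1) [], true),
     (eraseE g M {M.start} [], false),
     {Pb | (∃ q ∈ Pb.1, q ∈ M.accept) ∧ Pb.2 = true}⟩ with hD
  have INV : ∀ (v : List C) (P : Set Q) (bb : Bool),
      D.evalFrom (eraseE g M P [], bb) v = (eraseE g M P v, if v = [] then bb else true) := by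
    intro v
    induction v with
    | nil => intro P bb; simp [DFA.evalFrom]
    | cons c v ih =>
      intro P bb
      have hstep : D.evalFrom (eraseE g M P [], bb) (c :: v)
          = D.evalFrom (eraseE g M ((fun p => M.step p (ι c)) '' (eraseE g M P [])) [], true) v :=
        rfl
      rw [hstep, ih, ← eraseE_cons hgι hgsome]
      simp
  ext v
  rw [DFA.mem_accepts]
  have hev : D.eval v = (eraseE g M {M.start} v, if v = [] then false else true) :=
    INV v {M.start} false
  rw [show D.eval v = D.evalFrom D.start v from rfl] at hev
  rw [show D.eval v = D.evalFrom D.start v from rfl, hev]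
  simp only [Set.mem_setOf_eq, hD]
  constructor
  · rintro ⟨⟨q, ⟨w, hw, p, hp, hevq⟩, hacc⟩, h2⟩
    have hv : v ≠ [] := by
      intro he; rw [he] at h2; simp at h2
    refine ⟨hv, w, ?_, hw⟩
    rw [← hM, DFA.mem_accepts]
    simp only [Set.mem_singleton_iff] at hp
    rw [show M.eval w = M.evalFrom M.start w from rfl, ← hp]
    exact hevq ▸ hacc
  · rintro ⟨hv, w, hwL, hw⟩
    rw [← hM, DFA.mem_accepts] at hwL
    refine ⟨⟨M.eval w, ⟨w, hw, M.start, rfl, rfl⟩, hwL⟩, ?_⟩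
    simp [hv]

theorem forward_regular (hgι : ∀ c, g (ι c) = some c)
    (hgsome : ∀ b c, g b = some c → b = ι c) (b₀ : B) (hgb₀ : g b₀ = none)
    {L : Language C} (hreg : RegularLang L) (hnil : [] ∉ L) :
    RegularLang {w : List B | (∃ v ∈ L, v.map ι = w) ∨ w = [b₀]} := by
  classical
  obtain ⟨Q, _, M, hM⟩ := hreg
  refine ⟨Option Q ⊕ Bool, inferInstance,
    ⟨fun t b => match t with
      | Sum.inr _ => Sum.inr false
      | Sum.inl none => match g b with
          | some c => Sum.inl (some (M.step M.start c))
          | none => if b = b₀ then Sum.inr true else Sum.inr false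
      | Sum.inl (some q) => match g b with
          | some c => Sum.inl (some (M.step q c))
          | none => Sum.inr false,
     Sum.inl none,
     {t | (∃ q ∈ M.accept, t = Sum.inl (some q)) ∨ t = Sum.inr true}⟩, ?_⟩
  set D : DFA B (Option Q ⊕ Bool) :=
    ⟨fun t b => match t with
      | Sum.inr _ => Sum.inr false
      | Sum.inl none => match g b with
          | some c => Sum.inl (some (M.step M.start c))
          | none => if b = b₀ then Sum.inr true else Sum.inr false
      | Sum.inl (some q) => match g b with
          | some c => Sum.inl (some (M.step q c))
          | none => Sum.inr false,
     Sum.inl none,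
     {t | (∃ q ∈ M.accept, t = Sum.inl (some q)) ∨ t = Sum.inr true}⟩ with hD
  have stepsome : ∀ (q : Q) (b : B) (c : C), g b = some c →
      D.step (Sum.inl (some q)) b = Sum.inl (some (M.step q c)) := by
    intro q b c hb
    show (match g b with
          | some c => Sum.inl (some (M.step q c))
          | none => (Sum.inr false : Option Q ⊕ Bool)) = _
    rw [hb]
  have stepnonesome : ∀ (b : B) (c : C), g b = some c →
      D.step (Sum.inl none) b = Sum.inl (some (M.step M.start c)) := by
    intro b c hb
    show (match g b with
          | some c => Sum.inl (some (M.step M.start c))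
          | none => if b = b₀ then Sum.inr true else Sum.inr false) = _
    rw [hb]
  have stepnonenone : ∀ (b : B), g b = none →
      D.step (Sum.inl none) b = if b = b₀ then Sum.inr true else Sum.inr false := by
    intro b hb
    show (match g b with
          | some c => Sum.inl (some (M.step M.start c))
          | none => if b = b₀ then Sum.inr true else Sum.inr false) = _
    rw [hb]
  have stepsomenone : ∀ (q : Q) (b : B), g b = none →
      D.step (Sum.inl (some q)) b = Sum.inr false := by
    intro q b hb
    show (match g b with
          | some c => Sum.inl (some (M.step q c))
          | none => (Sum.inr false : Option Q ⊕ Bool)) = _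
    rw [hb]
  have stepr : ∀ (bb : Bool) (b : B), D.step (Sum.inr bb) b = Sum.inr false := fun _ _ => rfl
  have K0 : ∀ (v : List B), D.evalFrom (Sum.inr false) v = Sum.inr false := by
    intro v
    induction v with
    | nil => rfl
    | cons b v ih => rw [show D.evalFrom (Sum.inr false) (b :: v)
        = D.evalFrom (D.step (Sum.inr false) b) v from rfl, stepr]; exact ih
  have K3 : ∀ (v : List B) (bb : Bool), v ≠ [] → D.evalFrom (Sum.inr bb) v = Sum.inr false := by
    intro v bb hv
    match v with
    | b :: t =>
      rw [show D.evalFrom (Sum.inr bb) (b :: t) = D.evalFrom (D.step (Sum.inr bb) b) t from rfl,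
        stepr]
      exact K0 t
  have K1 : ∀ (v : List C) (q : Q),
      D.evalFrom (Sum.inl (some q)) (v.map ι) = Sum.inl (some (M.evalFrom q v)) := by
    intro v
    induction v with
    | nil => intro q; rfl
    | cons c v ih =>
      intro q
      rw [List.map_cons,
        show D.evalFrom (Sum.inl (some q)) (ι c :: v.map ι)
          = D.evalFrom (D.step (Sum.inl (some q)) (ι c)) (v.map ι) from rfl,
        stepsome q (ι c) c (hgι c), ih,
        show M.evalFrom q (c :: v) = M.evalFrom (M.step q c) v from rfl]
  have K5 : ∀ (t : List B) (q : Q), D.evalFrom (Sum.inl (some q)) t ∈ D.accept →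
      ∃ u, t = u.map ι ∧ M.evalFrom q u ∈ M.accept := by
    intro t
    induction t with
    | nil =>
      intro q hq
      rcases hq with ⟨q', hq', he⟩ | he
      · refine ⟨[], rfl, ?_⟩
        have hqq : q = q' := by simpa [DFA.evalFrom] using he
        rwa [show M.evalFrom q [] = q from rfl, hqq]
      · simp [DFA.evalFrom] at he
    | cons b t ih =>
      intro q hq
      rw [show D.evalFrom (Sum.inl (some q)) (b :: t)
        = D.evalFrom (D.step (Sum.inl (some q)) b) t from rfl] at hq
      cases hgb : g b with
      | none =>
        rw [stepsomenone q b hgb] at hq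
        rw [K0 t] at hq
        rcases hq with ⟨q', _, he⟩ | he <;> simp at he
      | some c =>
        rw [stepsome q b c hgb] at hq
        obtain ⟨u, rfl, hacc⟩ := ih (M.step q c) hq
        exact ⟨c :: u, by rw [List.map_cons, hgsome b c hgb], hacc⟩
  ext v
  rw [DFA.mem_accepts]
  constructor
  · intro hv
    match v with
    | [] =>
      exfalso
      rcases hv with ⟨q', _, he⟩ | he <;> simp [hD, DFA.eval, DFA.evalFrom] at he
    | b :: t =>
      rw [show D.eval (b :: t) = D.evalFrom (D.step (Sum.inl none) b) t from rfl] at hv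
      cases hgb : g b with
      | some c =>
        rw [stepnonesome b c hgb] at hv
        obtain ⟨u, rfl, hacc⟩ := K5 t (M.step M.start c) hv
        refine Or.inl ⟨c :: u, ?_, by rw [List.map_cons, hgsome b c hgb]⟩
        rw [← hM, DFA.mem_accepts]
        exact hacc
      | none =>
        rw [stepnonenone b hgb] at hv
        match t with
        | [] =>
          by_cases hb : b = b₀
          · right; rw [hb]
          · exfalso
            rw [if_neg hb] at hv
            rcases hv with ⟨q', _, he⟩ | he <;> simp [DFA.evalFrom] at he
        | x :: t' =>
          exfalso
          by_cases hb : b = b₀ <;> [rw [if_pos hb] at hv; rw [if_neg hb] at hv] <;>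
            rw [K3 _ _ (by simp)] at hv <;>
            (rcases hv with ⟨q', _, he⟩ | he <;> simp at he)
  · rintro (⟨u, huL, rfl⟩ | rfl)
    · have hu : u ≠ [] := fun h => hnil (h ▸ huL)
      match u with
      | c :: u' =>
        rw [List.map_cons,
          show D.eval (ι c :: u'.map ι) = D.evalFrom (D.step (Sum.inl none) (ι c)) (u'.map ι)
            from rfl,
          stepnonesome (ι c) c (hgι c), K1]
        left
        refine ⟨M.evalFrom (M.step M.start c) u', ?_, rfl⟩
        rw [← hM, DFA.mem_accepts] at huL
        exact huL
    · rw [show D.eval [b₀] = D.step (Sum.inl none) b₀ from rfl, stepnonenone b₀ hgb₀, if_pos rfl]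
      right; rfl

end Reg

/-! ### Main transfer lemmas -/

section Main
variable {S B C : Type} [Semigroup S]
variable {ψ : B → WithOne S} {φ : C → S} {ι : C → B} {g : B → Option C}

theorem forward_markov (hgι : ∀ c, g (ι c) = some c) (hg1 : ∀ b, g b = none → ψ b = 1)
    (hgsome : ∀ b c, g b = some c → b = ι c) (hψι : ∀ c, ψ (ι c) = ↑(φ c))
    (b₀ : B) (hb₀ : ψ b₀ = 1) {L : Language C} (hL : IsSgMarkovLang φ L) :
    IsSgMarkovLang ψ {w : List B | (∃ v ∈ L, v.map ι = w) ∨ w = [b₀]} := by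
  have hgb₀ : g b₀ = none := by
    cases hg : g b₀ with
    | none => rfl
    | some c =>
      exfalso
      rw [hgsome b₀ c hg, hψι c] at hb₀
      exact WithOne.coe_ne_one hb₀
  constructor
  · exact forward_regular hgι hgsome b₀ hgb₀ hL.regular hL.not_empty_mem
  · rintro (⟨v, hvL, he⟩ | he)
    · rw [List.map_eq_nil_iff] at he
      exact hL.not_empty_mem (he ▸ hvL)
    · simp at he
  · intro u v hu hv huv
    rcases huv with ⟨w, hwL, hw⟩ | he
    · rw [List.map_eq_append_iff] at hw
      obtain ⟨w1, w2, rfl, hm1, hm2⟩ := hw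
      have hw1 : w1 ≠ [] := by
        rintro rfl; exact hu (hm1.symm)
      have hw2 : w2 ≠ [] := by
        rintro rfl; exact hv (hm2.symm)
      exact Or.inl ⟨w1, hL.plus_prefix_closed w1 w2 hw1 hw2 hwL, hm1⟩
    · exfalso
      have h1 : 0 < u.length := List.length_pos_iff.mpr hu
      have h2 : 0 < v.length := List.length_pos_iff.mpr hv
      have := congrArg List.length he
      simp at this
      omega
  · intro x
    by_cases hx : x = 1
    · subst hx
      refine ⟨[b₀], ⟨Or.inr rfl, by simp [prodPlus, hb₀]⟩, ?_⟩
      rintro w' ⟨(⟨u, huL, rfl⟩ | rfl), hw'p⟩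
      · exfalso
        have hu : u ≠ [] := fun h => hL.not_empty_mem (h ▸ huL)
        have hmu : u.map ι ≠ [] := by simpa using hu
        have h0 := prodPlus_erase_one hg1 hgsome hψι (u.map ι) hmu hw'p
        rw [filterMap_map_ι hgι] at h0
        exact hu h0
      · rfl
    · obtain ⟨s, rfl⟩ := WithOne.ne_one_iff_exists.mp hx
      obtain ⟨w, ⟨hwL, hwp⟩, huniq⟩ := hL.unique_rep s
      refine ⟨w.map ι, ⟨Or.inl ⟨w, hwL, rfl⟩, prodPlus_map_ι hgι hg1 hgsome hψι w s hwp⟩, ?_⟩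
      rintro w' ⟨(⟨u, huL, rfl⟩ | rfl), hw'p⟩
      · have hu : u ≠ [] := fun h => hL.not_empty_mem (h ▸ huL)
        have hmu : u.map ι ≠ [] := by simpa using hu
        have h0 := prodPlus_erase_coe hg1 hgsome hψι (u.map ι) hmu s hw'p
        rw [filterMap_map_ι hgι] at h0
        rw [huniq u ⟨huL, h0⟩]
      · exfalso
        simp only [prodPlus, List.foldl_nil, Option.some.injEq] at hw'p
        rw [hb₀] at hw'p
        exact WithOne.coe_ne_one hw'p.symm

theorem forward_surj (hgι : ∀ c, g (ι c) = some c) (hg1 : ∀ b, g b = none → ψ b = 1)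
    (hgsome : ∀ b c, g b = some c → b = ι c) (hψι : ∀ c, ψ (ι c) = ↑(φ c))
    (b₀ : B) (hb₀ : ψ b₀ = 1) (hφs : ∀ s : S, ∃ w, prodPlus φ w = some s) :
    ∀ x : WithOne S, ∃ w : List B, prodPlus ψ w = some x := by
  intro x
  by_cases hx : x = 1
  · exact ⟨[b₀], by simp [prodPlus, hb₀, hx]⟩
  · obtain ⟨s, rfl⟩ := WithOne.ne_one_iff_exists.mp hx
    obtain ⟨w, hw⟩ := hφs s
    exact ⟨w.map ι, prodPlus_map_ι hgι hg1 hgsome hψι w s hw⟩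

theorem forward_robust (hgι : ∀ c, g (ι c) = some c) (hg1 : ∀ b, g b = none → ψ b = 1)
    (hgsome : ∀ b c, g b = some c → b = ι c) (hψι : ∀ c, ψ (ι c) = ↑(φ c))
    (b₀ : B) (hb₀ : ψ b₀ = 1) {L : Language C} (hL : IsRobustSgMarkovLang φ L) :
    IsRobustSgMarkovLang ψ {w : List B | (∃ v ∈ L, v.map ι = w) ∨ w = [b₀]} := by
  refine ⟨forward_markov hgι hg1 hgsome hψι b₀ hb₀ hL.toIsSgMarkovLang, ?_⟩
  rintro w' hw' v hv
  rcases hw' with ⟨w, hwL, rfl⟩ | rfl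
  · have hw : w ≠ [] := fun h => hL.not_empty_mem (h ▸ hwL)
    obtain ⟨s, hs⟩ := exists_prodPlus φ w hw
    rw [prodPlus_map_ι hgι hg1 hgsome hψι w s hs] at hv
    have hvne : v ≠ [] := ne_nil_of_prodPlus hv
    have hfm : prodPlus φ (v.filterMap g) = prodPlus φ w := by
      rw [prodPlus_erase_coe hg1 hgsome hψι v hvne s hv, hs]
    have hlen := hL.min_length w hwL (v.filterMap g) hfm
    calc (w.map ι).length = w.length := by simp
      _ ≤ (v.filterMap g).length := hlen
      _ ≤ v.length := List.length_filterMap_le g v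
  · simp only [prodPlus, List.foldl_nil, hb₀] at hv
    have hvne : v ≠ [] := ne_nil_of_prodPlus hv
    simpa using Nat.one_le_iff_ne_zero.mpr (Nat.pos_iff_ne_zero.mp (List.length_pos_iff.mpr hvne))

theorem erase_markov (hgι : ∀ c, g (ι c) = some c) (hg1 : ∀ b, g b = none → ψ b = 1)
    (hgsome : ∀ b c, g b = some c → b = ι c) (hψι : ∀ c, ψ (ι c) = ↑(φ c))
    {L : Language B} (hL : IsSgMarkovLang ψ L) :
    IsSgMarkovLang φ {v : List C | v ≠ [] ∧ ∃ w ∈ L, w.filterMap g = v} := by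
  constructor
  · exact erase_regular hgι hgsome hL.regular
  · rintro ⟨h, -⟩; exact h rfl
  · rintro u v hu hv ⟨-, w, hwL, hw⟩
    rw [List.filterMap_eq_append_iff] at hw
    obtain ⟨w1, w2, rfl, h1, h2⟩ := hw
    have hw1 : w1 ≠ [] := by rintro rfl; exact hu h1.symm
    have hw2 : w2 ≠ [] := by rintro rfl; exact hv h2.symm
    exact ⟨hu, w1, hL.plus_prefix_closed w1 w2 hw1 hw2 hwL, h1⟩
  · intro s
    obtain ⟨w, ⟨hwL, hwp⟩, huniq⟩ := hL.unique_rep (↑s : WithOne S)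
    have hw : w ≠ [] := fun h => hL.not_empty_mem (h ▸ hwL)
    have hprod : prodPlus φ (w.filterMap g) = some s :=
      prodPlus_erase_coe hg1 hgsome hψι w hw s hwp
    have hne : w.filterMap g ≠ [] := ne_nil_of_prodPlus hprod
    refine ⟨w.filterMap g, ⟨⟨hne, w, hwL, rfl⟩, hprod⟩, ?_⟩
    rintro v ⟨⟨hvne, w', hw'L, rfl⟩, hvp⟩
    have hw' : w' ≠ [] := fun h => hL.not_empty_mem (h ▸ hw'L)
    have hw'p : prodPlus ψ w' = some (↑s : WithOne S) := by
      rw [prodPlus_erase hg1 hgsome hψι w' hw', monProd_coe φ _ s hvp]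
    rw [huniq w' ⟨hw'L, hw'p⟩]

theorem erase_surj (hg1 : ∀ b, g b = none → ψ b = 1)
    (hgsome : ∀ b c, g b = some c → b = ι c) (hψι : ∀ c, ψ (ι c) = ↑(φ c))
    (hψs : ∀ x : WithOne S, ∃ w, prodPlus ψ w = some x) :
    ∀ s : S, ∃ v : List C, prodPlus φ v = some s := by
  intro s
  obtain ⟨w, hw⟩ := hψs ↑s
  exact ⟨w.filterMap g, prodPlus_erase_coe hg1 hgsome hψι w (ne_nil_of_prodPlus hw) s hw⟩

theorem erase_robust (hgι : ∀ c, g (ι c) = some c) (hg1 : ∀ b, g b = none → ψ b = 1)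
    (hgsome : ∀ b c, g b = some c → b = ι c) (hψι : ∀ c, ψ (ι c) = ↑(φ c))
    {L : Language B} (hL : IsRobustSgMarkovLang ψ L) :
    IsRobustSgMarkovLang φ {v : List C | v ≠ [] ∧ ∃ w ∈ L, w.filterMap g = v} := by
  refine ⟨erase_markov hgι hg1 hgsome hψι hL.toIsSgMarkovLang, ?_⟩
  rintro v ⟨hvne, w, hwL, rfl⟩ u hu
  have hw : w ≠ [] := fun h => hL.not_empty_mem (h ▸ hwL)
  obtain ⟨s, hs⟩ := exists_prodPlus φ _ hvne
  rw [hs] at hu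
  have h1 : prodPlus ψ (u.map ι) = some (↑s : WithOne S) :=
    prodPlus_map_ι hgι hg1 hgsome hψι u s hu
  have h2 : prodPlus ψ w = some (↑s : WithOne S) := by
    rw [prodPlus_erase hg1 hgsome hψι w hw, monProd_coe φ _ s hs]
  have hlen := hL.min_length w hwL (u.map ι) (by rw [h1, h2])
  calc (w.filterMap g).length ≤ w.length := List.length_filterMap_le g w
    _ ≤ (u.map ι).length := hlen
    _ = u.length := by simp

end Main

/-! ### Instantiations -/

section Inst1
variable {A S : Type} [Semigroup S] (φ : A → S)

theorem inst1_hgι : ∀ c : A, (Sum.elim (fun a => some a) (fun _ => none) : A ⊕ Unit → Option A)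
    (Sum.inl c) = some c := fun _ => rfl

theorem inst1_hg1 : ∀ b : A ⊕ Unit,
    (Sum.elim (fun a => some a) (fun _ => none) : A ⊕ Unit → Option A) b = none →
    (Sum.elim (fun a => (↑(φ a) : WithOne S)) (fun _ => 1)) b = 1 := by
  rintro (a | u) h
  · simp at h
  · rfl

theorem inst1_hgsome : ∀ (b : A ⊕ Unit) (c : A),
    (Sum.elim (fun a => some a) (fun _ => none) : A ⊕ Unit → Option A) b = some c →
    b = Sum.inl c := by
  rintro (a | u) c h
  · simpa using congrArg (Sum.inl : A → A ⊕ Unit) (Option.some.inj h)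
  · simp at h

theorem inst1_hψι : ∀ c : A,
    (Sum.elim (fun a => (↑(φ a) : WithOne S)) (fun _ => 1) : A ⊕ Unit → WithOne S)
      (Sum.inl c) = ↑(φ c) := fun _ => rfl

theorem inst1_hb₀ :
    (Sum.elim (fun a => (↑(φ a) : WithOne S)) (fun _ => 1)) (Sum.inr ()) = 1 := rfl

end Inst1

theorem package2 {A S : Type} [Semigroup S] (φ' : A → WithOne S) :
    ∃ (φ : {a : A // φ' a ≠ 1} → S) (g : A → Option {a : A // φ' a ≠ 1}),
      (∀ c, g c.val = some c) ∧ (∀ b, g b = none → φ' b = 1) ∧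
      (∀ b c, g b = some c → b = c.val) ∧ (∀ c, φ' c.val = ↑(φ c)) := by
  classical
  refine ⟨fun c => (WithOne.ne_one_iff_exists.mp c.2).choose,
    fun b => if h : φ' b = 1 then none else some ⟨b, h⟩, ?_, ?_, ?_, ?_⟩
  · intro c
    show (if h : φ' c.val = 1 then none else some (⟨c.val, h⟩ : {a : A // φ' a ≠ 1})) = some c
    rw [dif_neg c.2]
  · intro b h
    by_contra hb
    simp only [dif_neg hb] at h
    exact (Option.some_ne_none _ h).elim
  · intro b c h
    by_cases hb : φ' b = 1
    · simp only [dif_pos hb] at h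
      exact ((Option.some_ne_none _) h.symm).elim
    · simp only [dif_neg hb, Option.some.injEq] at h
      rw [← h]
  · intro c
    exact ((WithOne.ne_one_iff_exists.mp c.2).choose_spec).symm

end Stmt15Aux

open Stmt15Aux in
/-- Adjoining an identity: `S` is Markov (resp. robustly Markov with respect to some
alphabet, strongly Markov) iff `S¹` is. -/
theorem stmt15 {S : Type} [Semigroup S] :
    (SgMarkov S ↔ SgMarkov (WithOne S)) ∧
    (SgRobustlyMarkov S ↔ SgRobustlyMarkov (WithOne S)) ∧
    (SgStronglyMarkov S ↔ SgStronglyMarkov (WithOne S)) := by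
  refine ⟨⟨?_, ?_⟩, ⟨?_, ?_⟩, ⟨?_, ?_⟩⟩
  · rintro ⟨A, hA, φ, hsurj, L, hL⟩
    haveI := hA
    exact ⟨A ⊕ Unit, inferInstance, Sum.elim (fun a => (↑(φ a) : WithOne S)) (fun _ => 1),
      forward_surj inst1_hgι (inst1_hg1 φ) inst1_hgsome (inst1_hψι φ) (Sum.inr ())
        (inst1_hb₀ φ) hsurj,
      _, forward_markov inst1_hgι (inst1_hg1 φ) inst1_hgsome (inst1_hψι φ) (Sum.inr ())
        (inst1_hb₀ φ) hL⟩
  · rintro ⟨A, hA, φ', hsurj, L, hL⟩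
    haveI := hA
    obtain ⟨φ, g, hgι, hg1, hgsome, hψι⟩ := package2 φ'
    haveI : Fintype {a : A // φ' a ≠ 1} := by classical exact Subtype.fintype _
    exact ⟨{a : A // φ' a ≠ 1}, inferInstance, φ,
      erase_surj hg1 hgsome hψι hsurj,
      _, erase_markov hgι hg1 hgsome hψι hL⟩
  · rintro ⟨A, hA, φ, hsurj, L, hL⟩
    haveI := hA
    exact ⟨A ⊕ Unit, inferInstance, Sum.elim (fun a => (↑(φ a) : WithOne S)) (fun _ => 1),
      forward_surj inst1_hgι (inst1_hg1 φ) inst1_hgsome (inst1_hψι φ) (Sum.inr ())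
        (inst1_hb₀ φ) hsurj,
      _, forward_robust inst1_hgι (inst1_hg1 φ) inst1_hgsome (inst1_hψι φ) (Sum.inr ())
        (inst1_hb₀ φ) hL⟩
  · rintro ⟨A, hA, φ', hsurj, L, hL⟩
    haveI := hA
    obtain ⟨φ, g, hgι, hg1, hgsome, hψι⟩ := package2 φ'
    haveI : Fintype {a : A // φ' a ≠ 1} := by classical exact Subtype.fintype _
    exact ⟨{a : A // φ' a ≠ 1}, inferInstance, φ,
      erase_surj hg1 hgsome hψι hsurj,
      _, erase_robust hgι hg1 hgsome hψι hL⟩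
  · intro hS B hB ψ hsurj
    haveI := hB
    obtain ⟨φ, g, hgι, hg1, hgsome, hψι⟩ := package2 ψ
    haveI : Fintype {b : B // ψ b ≠ 1} := by classical exact Subtype.fintype _
    have hφs : ∀ s : S, ∃ v, prodPlus φ v = some s := erase_surj hg1 hgsome hψι hsurj
    obtain ⟨L, hL⟩ := hS _ φ hφs
    obtain ⟨w1, hw1⟩ := hsurj 1
    obtain ⟨b₀, hb₀⟩ := exists_one_letter hg1 hgsome hψι w1 hw1
    exact ⟨_, forward_robust hgι hg1 hgsome hψι b₀ hb₀ hL⟩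
  · intro hS1 A hA φ hsurj
    haveI := hA
    have hψs : ∀ x : WithOne S,
        ∃ w, prodPlus (Sum.elim (fun a => (↑(φ a) : WithOne S)) (fun _ => 1)) w = some x :=
      forward_surj inst1_hgι (inst1_hg1 φ) inst1_hgsome (inst1_hψι φ) (Sum.inr ())
        (inst1_hb₀ φ) hsurj
    obtain ⟨L, hL⟩ := hS1 (A ⊕ Unit) (Sum.elim (fun a => (↑(φ a) : WithOne S)) (fun _ => 1)) hψs
    exact ⟨_, erase_robust inst1_hgι (inst1_hg1 φ) inst1_hgsome (inst1_hψι φ) hL⟩
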